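/- For every positive integer n, ι(Q_{n+1}) = γ(Q_n), where Q_n denotes the n-dimensional hypercube graph. -/

import Mathlib

/-- The closed neighborhood `N[A]` of a set of vertices. -/
def closedNbhd {V : Type*} (G : SimpleGraph V) (A : Set V) : Set V :=
  {v | v ∈ A ∨ ∃ a ∈ A, G.Adj a v}

/-- A set of vertices is independent if it contains no edge. -/
def IndepSet {V : Type*} (G : SimpleGraph V) (S : Set V) : Prop :=
  ∀ u ∈ S, ∀ v ∈ S, ¬ G.Adj u v

/-- `A` is isolating if the vertices outside `N[A]` form an independent set. -/
def IsIsolating {V : Type*} (G : SimpleGraph V) (A : Set V) : Prop :=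
  IndepSet G (closedNbhd G A)ᶜ

/-- The isolation number `ι(G)`. -/
noncomputable def isolationNum {V : Type*} (G : SimpleGraph V) : ℕ :=
  sInf {n | ∃ A : Set V, IsIsolating G A ∧ A.ncard = n}

/-- `D` is a dominating set if `N[D] = V(G)`. -/
def IsDominating {V : Type*} (G : SimpleGraph V) (D : Set V) : Prop :=
  closedNbhd G D = Set.univ

/-- The domination number `γ(G)`. -/
noncomputable def dominationNum {V : Type*} (G : SimpleGraph V) : ℕ :=
  sInf {n | ∃ D : Set V, IsDominating G D ∧ D.ncard = n}
/-- The `n`-dimensional hypercube graph `Q_n`: vertices are `{0,1}^n`, two vertices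
being adjacent iff they differ in exactly one coordinate. -/
def hypercube (n : ℕ) : SimpleGraph (Fin n → Bool) where
  Adj u v := ∃ i, u i ≠ v i ∧ ∀ j, u j ≠ v j → j = i
  symm := by
    constructor
    rintro u v ⟨i, h1, h2⟩
    exact ⟨i, h1.symm, fun j hj => h2 j hj.symm⟩
  loopless := by
    constructor
    rintro u ⟨i, h1, -⟩
    exact h1 rfl


lemma adj_succ_iff {n : ℕ} (u v : Fin (n+1) → Bool) :
    (hypercube (n+1)).Adj u v ↔
      (Fin.init u = Fin.init v ∧ u (Fin.last n) ≠ v (Fin.last n)) ∨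
      ((hypercube n).Adj (Fin.init u) (Fin.init v) ∧ u (Fin.last n) = v (Fin.last n)) := by
  constructor
  · rintro ⟨i, hi, huniq⟩
    rcases Fin.eq_castSucc_or_eq_last i with ⟨i', rfl⟩ | rfl
    · right
      refine ⟨⟨i', hi, fun j hj => Fin.castSucc_injective _ (huniq j.castSucc hj)⟩, ?_⟩
      by_contra h
      exact absurd (huniq _ h).symm (Fin.castSucc_lt_last i').ne
    · left
      refine ⟨funext fun j => by_contra fun h => ?_, hi⟩
      exact absurd (huniq j.castSucc h) (Fin.castSucc_lt_last j).ne
  · rintro (⟨h1, h2⟩ | ⟨⟨i, hi, huniq⟩, h2⟩)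
    · exact ⟨Fin.last n, h2, fun j hj => by
        rcases Fin.eq_castSucc_or_eq_last j with ⟨j', rfl⟩ | rfl
        · exact absurd (congrFun h1 j') hj
        · rfl⟩
    · exact ⟨i.castSucc, hi, fun j hj => by
        rcases Fin.eq_castSucc_or_eq_last j with ⟨j', rfl⟩ | rfl
        · exact congrArg Fin.castSucc (huniq j' hj)
        · exact absurd h2 hj⟩

noncomputable def par {n : ℕ} (v : Fin n → Bool) : ZMod 2 :=
  ∑ i, if v i then 1 else 0

lemma par_ne_of_adj {n : ℕ} {u v : Fin n → Bool} (h : (hypercube n).Adj u v) :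
    par u ≠ par v := by
  obtain ⟨i, hi, huniq⟩ := h
  have key : par u + par v = 1 := by
    unfold par
    rw [← Finset.sum_add_distrib]
    rw [Finset.sum_eq_single i]
    · rcases Bool.eq_false_or_eq_true (u i) with h1 | h1 <;>
        rcases Bool.eq_false_or_eq_true (v i) with h2 | h2 <;>
        simp [h1, h2] at hi ⊢ <;> decide
    · intro j _ hj
      have : u j = v j := by
        by_contra hc
        exact hj (huniq j hc)
      rcases Bool.eq_false_or_eq_true (u j) with h1 | h1 <;>
        simp [h1, ← this] <;> decide
    · simp
  intro he
  rw [he] at key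
  have : ∀ x : ZMod 2, x + x ≠ 1 := by decide
  exact this _ key

noncomputable def parB {n : ℕ} (v : Fin n → Bool) : Bool :=
  if par v = 1 then true else false

lemma parB_ne_of_adj {n : ℕ} {u v : Fin n → Bool} (h : (hypercube n).Adj u v) :
    parB u ≠ parB v := by
  have hp := par_ne_of_adj h
  have h2 : ∀ x : ZMod 2, x = 0 ∨ x = 1 := by decide
  unfold parB
  rcases h2 (par u) with h1 | h1 <;> rcases h2 (par v) with h3 | h3 <;>
    simp_all

noncomputable def ext1 {n : ℕ} (d : Fin n → Bool) : Fin (n+1) → Bool :=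
  Fin.snoc d (parB d)

theorem isolation_hypercube_succ_eq_domination_hypercube (n : ℕ) (hn : 1 ≤ n) :
    isolationNum (hypercube (n + 1)) = dominationNum (hypercube n) := by
  set G1 := hypercube (n+1) with hG1
  set G0 := hypercube n with hG0
  have hIne : {m | ∃ A : Set (Fin (n+1) → Bool), IsIsolating G1 A ∧ A.ncard = m}.Nonempty := by
    refine ⟨(Set.univ : Set (Fin (n+1) → Bool)).ncard, Set.univ, ?_, rfl⟩
    intro u hu
    exact absurd (Or.inl trivial) hu
  have hDne : {m | ∃ D : Set (Fin n → Bool), IsDominating G0 D ∧ D.ncard = m}.Nonempty := by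
    refine ⟨(Set.univ : Set (Fin n → Bool)).ncard, Set.univ, ?_, rfl⟩
    rw [IsDominating, Set.eq_univ_iff_forall]
    intro v
    exact Or.inl trivial
  apply le_antisymm
  · -- ι(Q_{n+1}) ≤ γ(Q_n)
    obtain ⟨D, hD, hcard⟩ := Nat.sInf_mem hDne
    set A : Set (Fin (n+1) → Bool) := ext1 '' D with hAdef
    have hinj : Function.Injective (ext1 (n := n)) := by
      intro a b h
      have := congrArg Fin.init h
      simpa [ext1] using this
    have hAcard : A.ncard = D.ncard := Set.ncard_image_of_injective _ hinj
    have hDdom : ∀ v : Fin n → Bool, v ∈ closedNbhd G0 D := by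
      intro v; rw [hD]; trivial
    have huncov : ∀ u : Fin (n+1) → Bool, u ∉ closedNbhd G1 A →
        u (Fin.last n) = parB (Fin.init u) := by
      intro u hu
      by_contra hne
      by_cases hmem : Fin.init u ∈ D
      · apply hu
        right
        refine ⟨ext1 (Fin.init u), ⟨_, hmem, rfl⟩, ?_⟩
        rw [hG1, adj_succ_iff]
        left
        refine ⟨by simp [ext1], ?_⟩
        simp only [ext1, Fin.snoc_last]
        exact fun h => hne h.symm
      · rcases hDdom (Fin.init u) with h | ⟨d, hd, hadj⟩
        · exact hmem h
        · apply hu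
          right
          refine ⟨ext1 d, ⟨d, hd, rfl⟩, ?_⟩
          rw [hG1, adj_succ_iff]
          right
          have hpar : parB d ≠ parB (Fin.init u) := parB_ne_of_adj hadj
          have hlast : u (Fin.last n) = parB d := by
            revert hne hpar
            cases u (Fin.last n) <;> cases parB d <;> cases parB (Fin.init u) <;> simp
          exact ⟨by simpa [ext1] using hadj, by simp only [ext1, Fin.snoc_last]; exact hlast.symm⟩
    have hiso : IsIsolating G1 A := by
      intro x hx y hy hadj
      have hx' := huncov x hx
      have hy' := huncov y hy
      rw [hG1, adj_succ_iff] at hadj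
      rcases hadj with ⟨h1, h2⟩ | ⟨hadj0, h2⟩
      · apply h2
        rw [hx', hy', h1]
      · exact parB_ne_of_adj hadj0 (by rw [← hx', ← hy']; exact h2)
    calc isolationNum G1 ≤ A.ncard := Nat.sInf_le ⟨A, hiso, rfl⟩
      _ = dominationNum G0 := by rw [hAcard, hcard]; rfl
  · -- γ(Q_n) ≤ ι(Q_{n+1})
    obtain ⟨A, hA, hcard⟩ := Nat.sInf_mem hIne
    set D : Set (Fin n → Bool) := Fin.init '' A with hDdef
    have hdom : IsDominating G0 D := by
      rw [IsDominating, Set.eq_univ_iff_forall]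
      intro v
      by_contra hv
      have key : ∀ b : Bool, Fin.snoc v b ∉ closedNbhd G1 A := by
        intro b hb
        rcases hb with h | ⟨a, ha, hadj⟩
        · exact hv (Or.inl ⟨_, h, by rw [Fin.init_snoc]⟩)
        · rw [hG1, adj_succ_iff] at hadj
          rcases hadj with ⟨h1, _⟩ | ⟨h1, _⟩
          · refine hv (Or.inl ⟨a, ha, ?_⟩)
            rw [h1]; simp
          · exact hv (Or.inr ⟨Fin.init a, ⟨a, ha, rfl⟩, by rwa [Fin.init_snoc] at h1⟩)
      have hadj01 : G1.Adj (Fin.snoc v false) (Fin.snoc v true) := by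
        rw [hG1, adj_succ_iff]
        left
        simp
      exact hA _ (key false) _ (key true) hadj01
    have h1 : dominationNum G0 ≤ D.ncard := Nat.sInf_le ⟨D, hdom, rfl⟩
    have h2 : D.ncard ≤ A.ncard := Set.ncard_image_le (Set.toFinite A)
    exact le_trans (le_trans h1 h2) (le_of_eq (hcard.trans rfl))
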